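/- For the local groupoid G'' over S² defined by areas of spherical triangles (multiplication (z,y,a)·(y,x,a') = (z,x,a+a'+A(Δxyz)) defined when x+z ≠ 0 and A(Δxyz) ∈ (-π,π)), there exist arrows g_1,...,g_6 forming a composable 6-tuple and two full bracketings of the 6-fold product that are both defined but yield different results; concretely, using the seven points obtained from a regular tetrahedron inscribed in S² together with the radial projections of three edge midpoints, one evaluation gives third coordinate 2π and another gives -2π. Hence G'' is not globally associative and not globalizable. -/

import Mathlib

open scoped RealInnerProductSpace

noncomputable section

/-- The unit sphere `S² ⊂ ℝ³`. -/
def Sph : Type := Metric.sphere (0 : EuclideanSpace ℝ (Fin 3)) 1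

instance : Coe Sph (EuclideanSpace ℝ (Fin 3)) := ⟨fun x => x.1⟩

/-- The scalar triple product `x ⋅ (y × z)` in `ℝ³`. -/
def tripleProd (x y z : EuclideanSpace ℝ (Fin 3)) : ℝ :=
  x 0 * (y 1 * z 2 - y 2 * z 1) - x 1 * (y 0 * z 2 - y 2 * z 0) +
    x 2 * (y 0 * z 1 - y 1 * z 0)

/-- The signed area `A(Δxyz) ∈ (-2π, 2π]` of the geodesic spherical triangle with
vertices `x, y, z` on the unit sphere (the signed solid angle, via the
Van Oosterom–Strackee formula); it represents the area class in `ℝ/4πℤ`. -/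
def sphArea (x y z : EuclideanSpace ℝ (Fin 3)) : ℝ :=
  2 * Complex.arg (Complex.mk (1 + ⟪x, y⟫ + ⟪y, z⟫ + ⟪z, x⟫) (tripleProd x y z))

/-- Arrows of the local Lie groupoid `G''` over `S²`: triples `(y, x, a)` with target
`y`, source `x` and `a ∈ ℝ`. -/
def Arr : Type := Sph × Sph × ℝ

/-- Validity of an arrow `(y, x, a)`: the source and target are not antipodal,
`x + y ≠ 0`. -/
def ArrValid (p : Arr) : Prop := ((p.2.1 : EuclideanSpace ℝ (Fin 3)) + (p.1 : EuclideanSpace ℝ (Fin 3))) ≠ 0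

/-- The multiplication `(z,y,a) ⬝ (y,x,a') = (z, x, a + a' + A(Δxyz))` of `G''`. -/
def gMul (p q : Arr) : Arr :=
  (p.1, q.2.1, p.2.2 + q.2.2 + sphArea (q.2.1 : EuclideanSpace ℝ (Fin 3)) (p.2.1 : EuclideanSpace ℝ (Fin 3)) (p.1 : EuclideanSpace ℝ (Fin 3)))

/-- The domain of the multiplication of `G''`: `(z,y,a) ⬝ (y',x,a')` is defined
exactly when `y = y'`, `x + z ≠ 0` and the signed area `A(Δxyz)` lies in `(-π, π)`. -/
def gDef (p q : Arr) : Prop :=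
  p.2.1 = q.1 ∧
  ((q.2.1 : EuclideanSpace ℝ (Fin 3)) + (p.1 : EuclideanSpace ℝ (Fin 3))) ≠ 0 ∧
  sphArea (q.2.1 : EuclideanSpace ℝ (Fin 3)) (p.2.1 : EuclideanSpace ℝ (Fin 3)) (p.1 : EuclideanSpace ℝ (Fin 3)) ∈ Set.Ioo (-Real.pi) Real.pi

end

noncomputable section AuxProof

/-- A point of `ℝ³` from coordinates. -/
def pt (a b c : ℝ) : EuclideanSpace ℝ (Fin 3) := WithLp.toLp 2 ![a, b, c]

lemma pt_apply0 (a b c : ℝ) : pt a b c 0 = a := rfl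
lemma pt_apply1 (a b c : ℝ) : pt a b c 1 = b := rfl
lemma pt_apply2 (a b c : ℝ) : pt a b c 2 = c := rfl

open scoped RealInnerProductSpace in
lemma inner_pt (a b c a' b' c' : ℝ) :
    ⟪pt a b c, pt a' b' c'⟫ = a * a' + b * b' + c * c' := by
  simp [pt, PiLp.inner_apply, Fin.sum_univ_three, RCLike.inner_apply]
  ring

lemma norm_pt (a b c : ℝ) : ‖pt a b c‖ = Real.sqrt (a ^ 2 + b ^ 2 + c ^ 2) := by
  rw [EuclideanSpace.norm_eq]
  congr 1
  simp [pt, Fin.sum_univ_three, Real.norm_eq_abs, sq_abs]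

lemma pt_mem_sphere (a b c : ℝ) (h : a ^ 2 + b ^ 2 + c ^ 2 = 1) :
    pt a b c ∈ Metric.sphere (0 : EuclideanSpace ℝ (Fin 3)) 1 := by
  rw [mem_sphere_zero_iff_norm, norm_pt, h, Real.sqrt_one]

/-- Build a point of the sphere. -/
def mkS (a b c : ℝ) (h : a ^ 2 + b ^ 2 + c ^ 2 = 1) : Sph :=
  show Metric.sphere (0 : EuclideanSpace ℝ (Fin 3)) 1 from ⟨pt a b c, pt_mem_sphere a b c h⟩

lemma mkS_coe (a b c : ℝ) (h : a ^ 2 + b ^ 2 + c ^ 2 = 1) :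
    ((mkS a b c h : Sph) : EuclideanSpace ℝ (Fin 3)) = pt a b c := rfl

lemma arg_mk_one_one : Complex.arg (Complex.mk 1 1) = Real.pi / 4 := by
  have hs : Real.sqrt 2 ^ 2 = 2 := Real.sq_sqrt (by norm_num)
  have hsnn : (0 : ℝ) < Real.sqrt 2 := Real.sqrt_pos.2 (by norm_num)
  have h : (Complex.mk 1 1) =
      (Real.sqrt 2 : ℝ) * (Complex.cos (Real.pi / 4 : ℝ) + Complex.sin (Real.pi / 4 : ℝ) * Complex.I) := by
    rw [← Complex.ofReal_cos, ← Complex.ofReal_sin, Real.cos_pi_div_four, Real.sin_pi_div_four]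
    apply Complex.ext <;> simp <;> nlinarith
  rw [h, Complex.arg_mul_cos_add_sin_mul_I hsnn]
  constructor <;> [nlinarith [Real.pi_pos]; nlinarith [Real.pi_pos]]

lemma arg_mk_one_negone : Complex.arg (Complex.mk 1 (-1)) = -(Real.pi / 4) := by
  have hc : (starRingEnd ℂ) (Complex.mk 1 1) = Complex.mk 1 (-1) := by
    simp [Complex.ext_iff]
  have h := Complex.arg_conj (Complex.mk 1 1)
  rw [hc, arg_mk_one_one, if_neg] at h
  · exact h
  · intro hco
    nlinarith [Real.pi_pos]

lemma sphArea_eq_of (x y z : EuclideanSpace ℝ (Fin 3)) {r i : ℝ}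
    (hre : 1 + ⟪x, y⟫ + ⟪y, z⟫ + ⟪z, x⟫ = r) (him : tripleProd x y z = i) :
    sphArea x y z = 2 * Complex.arg (Complex.mk r i) := by
  rw [sphArea, hre, him]

open scoped RealInnerProductSpace in
lemma sphArea_pos (x y z : EuclideanSpace ℝ (Fin 3))
    (h1 : ⟪x, y⟫ = 0) (h2 : ⟪y, z⟫ = 0) (h3 : ⟪z, x⟫ = 0)
    (ht : tripleProd x y z = 1) : sphArea x y z = Real.pi / 2 := by
  rw [sphArea_eq_of x y z (r := 1) (by rw [h1, h2, h3]; norm_num) ht, arg_mk_one_one]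
  ring

open scoped RealInnerProductSpace in
lemma sphArea_neg (x y z : EuclideanSpace ℝ (Fin 3))
    (h1 : ⟪x, y⟫ = 0) (h2 : ⟪y, z⟫ = 0) (h3 : ⟪z, x⟫ = 0)
    (ht : tripleProd x y z = -1) : sphArea x y z = -(Real.pi / 2) := by
  rw [sphArea_eq_of x y z (r := 1) (by rw [h1, h2, h3]; norm_num) ht, arg_mk_one_negone]
  ring

open scoped RealInnerProductSpace in
lemma sphArea_zero (x y z : EuclideanSpace ℝ (Fin 3))
    (hre : 1 + ⟪x, y⟫ + ⟪y, z⟫ + ⟪z, x⟫ = 2) (ht : tripleProd x y z = 0) :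
    sphArea x y z = 0 := by
  rw [sphArea_eq_of x y z hre ht]
  have : (Complex.mk 2 0) = ((2 : ℝ) : ℂ) := by simp [Complex.ext_iff]
  rw [this, Complex.arg_ofReal_of_nonneg (by norm_num)]
  ring

lemma pt_add (a b c a' b' c' : ℝ) :
    pt a b c + pt a' b' c' = pt (a + a') (b + b') (c + c') := by
  ext i
  fin_cases i <;> rfl

lemma pt_smul (r a b c : ℝ) : r • pt a b c = pt (r * a) (r * b) (r * c) := by
  ext i
  fin_cases i <;> rfl

lemma pt_ne_zero0 {a : ℝ} (h : a ≠ 0) (b c : ℝ) : pt a b c ≠ 0 :=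
  fun hz => h (by simpa [pt_apply0] using congrArg (fun v : EuclideanSpace ℝ (Fin 3) => v 0) hz)

lemma pt_ne_zero1 {b : ℝ} (h : b ≠ 0) (a c : ℝ) : pt a b c ≠ 0 :=
  fun hz => h (by simpa [pt_apply1] using congrArg (fun v : EuclideanSpace ℝ (Fin 3) => v 1) hz)

lemma mem_Ioo_pos : Real.pi / 2 ∈ Set.Ioo (-Real.pi) Real.pi := by
  constructor <;> nlinarith [Real.pi_pos]

lemma mem_Ioo_neg : -(Real.pi / 2) ∈ Set.Ioo (-Real.pi) Real.pi := by
  constructor <;> nlinarith [Real.pi_pos]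

/-- The seven points. -/
lemma mem_Ioo_zero : (0:ℝ) ∈ Set.Ioo (-Real.pi) Real.pi := by
  constructor <;> nlinarith [Real.pi_pos]

lemma pt_congr {a b c a' b' c' : ℝ} (h1 : a = a') (h2 : b = b') (h3 : c = c') :
    pt a b c = pt a' b' c' := by rw [h1, h2, h3]

/-- side length parameter of the tetrahedron -/
def ta : ℝ := (Real.sqrt 3)⁻¹

lemma ta_pos : 0 < ta := by
  rw [ta]
  positivity

lemma ta_sq : ta ^ 2 = 1 / 3 := by
  rw [ta, inv_pow, Real.sq_sqrt (by norm_num : (0:ℝ) ≤ 3)]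
  norm_num

/-- the regular tetrahedron -/
def tv : Fin 4 → EuclideanSpace ℝ (Fin 3) :=
  ![pt ta ta ta, pt ta (-ta) (-ta), pt (-ta) ta (-ta), pt (-ta) (-ta) ta]

lemma mid_eq (a b c : ℝ) (i j : Fin 4)
    (h : tv i + tv j = pt (2 * ta * a) (2 * ta * b) (2 * ta * c))
    (hn : a ^ 2 + b ^ 2 + c ^ 2 = 1) :
    ‖tv i + tv j‖⁻¹ • (tv i + tv j) = pt a b c := by
  have hta := ta_pos
  rw [h, norm_pt,
    show (2 * ta * a) ^ 2 + (2 * ta * b) ^ 2 + (2 * ta * c) ^ 2 = (2 * ta) ^ 2 by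
      linear_combination (2 * ta) ^ 2 * hn,
    Real.sqrt_sq (by positivity), pt_smul]
  exact pt_congr (by field_simp) (by field_simp) (by field_simp)

/-- The seven points. -/
def X0 : Sph := mkS 1 0 0 (by norm_num)
def X1 : Sph := mkS 0 1 0 (by norm_num)
def X2 : Sph := mkS 0 0 (-1) (by norm_num)
def X3 : Sph := mkS (-1) 0 0 (by norm_num)
def X4 : Sph := mkS 0 0 1 (by norm_num)
def X5 : Sph := mkS 0 (-1) 0 (by norm_num)

end AuxProof

open scoped RealInnerProductSpace in
/-- Failure of 6-associativity in the spherical-area local groupoid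
`G''`: there are seven points `x 0, …, x 6` on the sphere, obtained from a regular
inscribed tetrahedron together with radial projections of edge midpoints, such that
the six arrows `gᵢ = (x (i+1), x i, 0)` form a composable 6-tuple for which the two
bracketings `F(E((D(CB))A))` and `((F((ED)C))B)A` are both defined, one evaluating
to third coordinate `2π` and the other to `-2π`; in particular, the two evaluations
differ, so `G''` is not globally associative (hence not globalizable). -/
theorem sphere_groupoid_not_six_associative :
    ∃ (x : Fin 7 → Sph) (v : Fin 4 → EuclideanSpace ℝ (Fin 3)),
      -- v is a regular tetrahedron inscribed in the unit sphere
      (∀ i, ‖v i‖ = 1) ∧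
      (∀ i j, i ≠ j → ⟪v i, v j⟫ = -(1/3 : ℝ)) ∧
      -- each point x k is a vertex or the radial projection of an edge midpoint
      (∀ k : Fin 7, (∃ i, (x k : EuclideanSpace ℝ (Fin 3)) = v i) ∨
        ∃ i j, i ≠ j ∧ (x k : EuclideanSpace ℝ (Fin 3)) =
          ‖v i + v j‖⁻¹ • (v i + v j)) ∧
      -- the six arrows and the two bracketings
      (let g : Fin 6 → Arr := fun i => (x i.succ, x i.castSucc, 0)
       let P1 := gMul (g 5) (gMul (g 4) (gMul (gMul (g 3) (gMul (g 2) (g 1))) (g 0)))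
       let P2 := gMul (gMul (gMul (g 5) (gMul (gMul (g 4) (g 3)) (g 2))) (g 1)) (g 0)
       (∀ i, ArrValid (g i)) ∧
       -- all products in F(E((D(CB))A)) are defined
       gDef (g 2) (g 1) ∧
       gDef (g 3) (gMul (g 2) (g 1)) ∧
       gDef (gMul (g 3) (gMul (g 2) (g 1))) (g 0) ∧
       gDef (g 4) (gMul (gMul (g 3) (gMul (g 2) (g 1))) (g 0)) ∧
       gDef (g 5) (gMul (g 4) (gMul (gMul (g 3) (gMul (g 2) (g 1))) (g 0))) ∧
       -- all products in ((F((ED)C))B)A are defined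
       gDef (g 4) (g 3) ∧
       gDef (gMul (g 4) (g 3)) (g 2) ∧
       gDef (g 5) (gMul (gMul (g 4) (g 3)) (g 2)) ∧
       gDef (gMul (g 5) (gMul (gMul (g 4) (g 3)) (g 2))) (g 1) ∧
       gDef (gMul (gMul (g 5) (gMul (gMul (g 4) (g 3)) (g 2))) (g 1)) (g 0) ∧
       -- the two evaluations disagree: 2π versus -2π
       P1.2.2 = 2 * Real.pi ∧
       P2.2.2 = -(2 * Real.pi) ∧
       P1 ≠ P2) := by
  refine ⟨![X0, X1, X2, X3, X4, X5, X0], tv, ?_, ?_, ?_, ?_⟩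
  · intro i
    fin_cases i
    · show ‖pt ta ta ta‖ = 1
      rw [norm_pt, show ta ^ 2 + ta ^ 2 + ta ^ 2 = (1:ℝ) by linear_combination 3 * ta_sq]
      exact Real.sqrt_one
    · show ‖pt ta (-ta) (-ta)‖ = 1
      rw [norm_pt, show ta ^ 2 + (-ta) ^ 2 + (-ta) ^ 2 = (1:ℝ) by linear_combination 3 * ta_sq]
      exact Real.sqrt_one
    · show ‖pt (-ta) ta (-ta)‖ = 1
      rw [norm_pt, show (-ta) ^ 2 + ta ^ 2 + (-ta) ^ 2 = (1:ℝ) by linear_combination 3 * ta_sq]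
      exact Real.sqrt_one
    · show ‖pt (-ta) (-ta) ta‖ = 1
      rw [norm_pt, show (-ta) ^ 2 + (-ta) ^ 2 + ta ^ 2 = (1:ℝ) by linear_combination 3 * ta_sq]
      exact Real.sqrt_one
  · intro i j hij
    fin_cases i <;> fin_cases j
    · exact absurd rfl hij
    · show ⟪pt ta ta ta, pt ta (-ta) (-ta)⟫ = -(1/3 : ℝ)
      rw [inner_pt]
      linear_combination (-1 : ℝ) * ta_sq
    · show ⟪pt ta ta ta, pt (-ta) ta (-ta)⟫ = -(1/3 : ℝ)
      rw [inner_pt]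
      linear_combination (-1 : ℝ) * ta_sq
    · show ⟪pt ta ta ta, pt (-ta) (-ta) ta⟫ = -(1/3 : ℝ)
      rw [inner_pt]
      linear_combination (-1 : ℝ) * ta_sq
    · show ⟪pt ta (-ta) (-ta), pt ta ta ta⟫ = -(1/3 : ℝ)
      rw [inner_pt]
      linear_combination (-1 : ℝ) * ta_sq
    · exact absurd rfl hij
    · show ⟪pt ta (-ta) (-ta), pt (-ta) ta (-ta)⟫ = -(1/3 : ℝ)
      rw [inner_pt]
      linear_combination (-1 : ℝ) * ta_sq
    · show ⟪pt ta (-ta) (-ta), pt (-ta) (-ta) ta⟫ = -(1/3 : ℝ)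
      rw [inner_pt]
      linear_combination (-1 : ℝ) * ta_sq
    · show ⟪pt (-ta) ta (-ta), pt ta ta ta⟫ = -(1/3 : ℝ)
      rw [inner_pt]
      linear_combination (-1 : ℝ) * ta_sq
    · show ⟪pt (-ta) ta (-ta), pt ta (-ta) (-ta)⟫ = -(1/3 : ℝ)
      rw [inner_pt]
      linear_combination (-1 : ℝ) * ta_sq
    · exact absurd rfl hij
    · show ⟪pt (-ta) ta (-ta), pt (-ta) (-ta) ta⟫ = -(1/3 : ℝ)
      rw [inner_pt]
      linear_combination (-1 : ℝ) * ta_sq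
    · show ⟪pt (-ta) (-ta) ta, pt ta ta ta⟫ = -(1/3 : ℝ)
      rw [inner_pt]
      linear_combination (-1 : ℝ) * ta_sq
    · show ⟪pt (-ta) (-ta) ta, pt ta (-ta) (-ta)⟫ = -(1/3 : ℝ)
      rw [inner_pt]
      linear_combination (-1 : ℝ) * ta_sq
    · show ⟪pt (-ta) (-ta) ta, pt (-ta) ta (-ta)⟫ = -(1/3 : ℝ)
      rw [inner_pt]
      linear_combination (-1 : ℝ) * ta_sq
    · exact absurd rfl hij
  · intro k
    fin_cases k
    · refine Or.inr ⟨0, 1, by decide, ?_⟩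
      rw [mid_eq 1 0 0 0 1
        (by show pt ta ta ta + pt ta (-ta) (-ta) = _
            rw [pt_add]; exact pt_congr (by ring) (by ring) (by ring))
        (by norm_num)]
      rfl
    · refine Or.inr ⟨0, 2, by decide, ?_⟩
      rw [mid_eq 0 1 0 0 2
        (by show pt ta ta ta + pt (-ta) ta (-ta) = _
            rw [pt_add]; exact pt_congr (by ring) (by ring) (by ring))
        (by norm_num)]
      rfl
    · refine Or.inr ⟨1, 2, by decide, ?_⟩
      rw [mid_eq 0 0 (-1) 1 2
        (by show pt ta (-ta) (-ta) + pt (-ta) ta (-ta) = _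
            rw [pt_add]; exact pt_congr (by ring) (by ring) (by ring))
        (by norm_num)]
      rfl
    · refine Or.inr ⟨2, 3, by decide, ?_⟩
      rw [mid_eq (-1) 0 0 2 3
        (by show pt (-ta) ta (-ta) + pt (-ta) (-ta) ta = _
            rw [pt_add]; exact pt_congr (by ring) (by ring) (by ring))
        (by norm_num)]
      rfl
    · refine Or.inr ⟨0, 3, by decide, ?_⟩
      rw [mid_eq 0 0 1 0 3
        (by show pt ta ta ta + pt (-ta) (-ta) ta = _
            rw [pt_add]; exact pt_congr (by ring) (by ring) (by ring))
        (by norm_num)]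
      rfl
    · refine Or.inr ⟨1, 3, by decide, ?_⟩
      rw [mid_eq 0 (-1) 0 1 3
        (by show pt ta (-ta) (-ta) + pt (-ta) (-ta) ta = _
            rw [pt_add]; exact pt_congr (by ring) (by ring) (by ring))
        (by norm_num)]
      rfl
    · refine Or.inr ⟨0, 1, by decide, ?_⟩
      rw [mid_eq 1 0 0 0 1
        (by show pt ta ta ta + pt ta (-ta) (-ta) = _
            rw [pt_add]; exact pt_congr (by ring) (by ring) (by ring))
        (by norm_num)]
      rfl
  · intro g P1 P2
    have hA1 : sphArea (pt 0 1 0) (pt 0 0 (-1)) (pt (-1) 0 0) = Real.pi / 2 :=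
      sphArea_pos _ _ _ (by rw [inner_pt]; ring) (by rw [inner_pt]; ring) (by rw [inner_pt]; ring)
        (by norm_num [tripleProd, pt_apply0, pt_apply1, pt_apply2])
    have hA2 : sphArea (pt 0 1 0) (pt (-1) 0 0) (pt 0 0 1) = Real.pi / 2 :=
      sphArea_pos _ _ _ (by rw [inner_pt]; ring) (by rw [inner_pt]; ring) (by rw [inner_pt]; ring)
        (by norm_num [tripleProd, pt_apply0, pt_apply1, pt_apply2])
    have hA3 : sphArea (pt 1 0 0) (pt 0 1 0) (pt 0 0 1) = Real.pi / 2 :=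
      sphArea_pos _ _ _ (by rw [inner_pt]; ring) (by rw [inner_pt]; ring) (by rw [inner_pt]; ring)
        (by norm_num [tripleProd, pt_apply0, pt_apply1, pt_apply2])
    have hA4 : sphArea (pt 1 0 0) (pt 0 0 1) (pt 0 (-1) 0) = Real.pi / 2 :=
      sphArea_pos _ _ _ (by rw [inner_pt]; ring) (by rw [inner_pt]; ring) (by rw [inner_pt]; ring)
        (by norm_num [tripleProd, pt_apply0, pt_apply1, pt_apply2])
    have hB1 : sphArea (pt (-1) 0 0) (pt 0 0 1) (pt 0 (-1) 0) = -(Real.pi / 2) :=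
      sphArea_neg _ _ _ (by rw [inner_pt]; ring) (by rw [inner_pt]; ring) (by rw [inner_pt]; ring)
        (by norm_num [tripleProd, pt_apply0, pt_apply1, pt_apply2])
    have hB2 : sphArea (pt 0 0 (-1)) (pt (-1) 0 0) (pt 0 (-1) 0) = -(Real.pi / 2) :=
      sphArea_neg _ _ _ (by rw [inner_pt]; ring) (by rw [inner_pt]; ring) (by rw [inner_pt]; ring)
        (by norm_num [tripleProd, pt_apply0, pt_apply1, pt_apply2])
    have hB3 : sphArea (pt 0 0 (-1)) (pt 0 (-1) 0) (pt 1 0 0) = -(Real.pi / 2) :=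
      sphArea_neg _ _ _ (by rw [inner_pt]; ring) (by rw [inner_pt]; ring) (by rw [inner_pt]; ring)
        (by norm_num [tripleProd, pt_apply0, pt_apply1, pt_apply2])
    have hB4 : sphArea (pt 0 1 0) (pt 0 0 (-1)) (pt 1 0 0) = -(Real.pi / 2) :=
      sphArea_neg _ _ _ (by rw [inner_pt]; ring) (by rw [inner_pt]; ring) (by rw [inner_pt]; ring)
        (by norm_num [tripleProd, pt_apply0, pt_apply1, pt_apply2])
    have hA5 : sphArea (pt 1 0 0) (pt 0 (-1) 0) (pt 1 0 0) = 0 :=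
      sphArea_zero _ _ _ (by rw [inner_pt, inner_pt, inner_pt]; ring) (by norm_num [tripleProd, pt_apply0, pt_apply1, pt_apply2])
    have hB5 : sphArea (pt 1 0 0) (pt 0 1 0) (pt 1 0 0) = 0 :=
      sphArea_zero _ _ _ (by rw [inner_pt, inner_pt, inner_pt]; ring) (by norm_num [tripleProd, pt_apply0, pt_apply1, pt_apply2])
    have hP1 : P1.2.2 = 2 * Real.pi := by
      show (0:ℝ) + (0 + ((0 + (0 + 0 + sphArea (pt 0 1 0) (pt 0 0 (-1)) (pt (-1) 0 0)) + sphArea (pt 0 1 0) (pt (-1) 0 0) (pt 0 0 1)) + 0 + sphArea (pt 1 0 0) (pt 0 1 0) (pt 0 0 1)) + sphArea (pt 1 0 0) (pt 0 0 1) (pt 0 (-1) 0)) + sphArea (pt 1 0 0) (pt 0 (-1) 0) (pt 1 0 0) = 2 * Real.pi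
      rw [hA1, hA2, hA3, hA4, hA5]
      ring
    have hP2 : P2.2.2 = -(2 * Real.pi) := by
      show (((0:ℝ) + ((0 + 0 + sphArea (pt (-1) 0 0) (pt 0 0 1) (pt 0 (-1) 0)) + 0 + sphArea (pt 0 0 (-1)) (pt (-1) 0 0) (pt 0 (-1) 0)) + sphArea (pt 0 0 (-1)) (pt 0 (-1) 0) (pt 1 0 0)) + 0 + sphArea (pt 0 1 0) (pt 0 0 (-1)) (pt 1 0 0)) + 0 + sphArea (pt 1 0 0) (pt 0 1 0) (pt 1 0 0) = -(2 * Real.pi)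
      rw [hB1, hB2, hB3, hB4, hB5]
      ring
    refine ⟨?_, ?_, ?_, ?_, ?_, ?_, ?_, ?_, ?_, ?_, ?_, hP1, hP2, ?_⟩
    · intro i
      fin_cases i
      · show (pt 1 0 0) + (pt 0 1 0) ≠ 0
        rw [pt_add]
        exact pt_ne_zero0 (by norm_num) _ _
      · show (pt 0 1 0) + (pt 0 0 (-1)) ≠ 0
        rw [pt_add]
        exact pt_ne_zero1 (by norm_num) _ _
      · show (pt 0 0 (-1)) + (pt (-1) 0 0) ≠ 0
        rw [pt_add]
        exact pt_ne_zero0 (by norm_num) _ _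
      · show (pt (-1) 0 0) + (pt 0 0 1) ≠ 0
        rw [pt_add]
        exact pt_ne_zero0 (by norm_num) _ _
      · show (pt 0 0 1) + (pt 0 (-1) 0) ≠ 0
        rw [pt_add]
        exact pt_ne_zero1 (by norm_num) _ _
      · show (pt 0 (-1) 0) + (pt 1 0 0) ≠ 0
        rw [pt_add]
        exact pt_ne_zero0 (by norm_num) _ _
    · refine ⟨rfl, ?_, ?_⟩
      · show (pt 0 1 0) + (pt (-1) 0 0) ≠ 0
        rw [pt_add]
        exact pt_ne_zero0 (by norm_num) _ _
      · show sphArea (pt 0 1 0) (pt 0 0 (-1)) (pt (-1) 0 0) ∈ Set.Ioo (-Real.pi) Real.pi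
        rw [hA1]
        exact mem_Ioo_pos
    · refine ⟨rfl, ?_, ?_⟩
      · show (pt 0 1 0) + (pt 0 0 1) ≠ 0
        rw [pt_add]
        exact pt_ne_zero1 (by norm_num) _ _
      · show sphArea (pt 0 1 0) (pt (-1) 0 0) (pt 0 0 1) ∈ Set.Ioo (-Real.pi) Real.pi
        rw [hA2]
        exact mem_Ioo_pos
    · refine ⟨rfl, ?_, ?_⟩
      · show (pt 1 0 0) + (pt 0 0 1) ≠ 0
        rw [pt_add]
        exact pt_ne_zero0 (by norm_num) _ _
      · show sphArea (pt 1 0 0) (pt 0 1 0) (pt 0 0 1) ∈ Set.Ioo (-Real.pi) Real.pi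
        rw [hA3]
        exact mem_Ioo_pos
    · refine ⟨rfl, ?_, ?_⟩
      · show (pt 1 0 0) + (pt 0 (-1) 0) ≠ 0
        rw [pt_add]
        exact pt_ne_zero0 (by norm_num) _ _
      · show sphArea (pt 1 0 0) (pt 0 0 1) (pt 0 (-1) 0) ∈ Set.Ioo (-Real.pi) Real.pi
        rw [hA4]
        exact mem_Ioo_pos
    · refine ⟨rfl, ?_, ?_⟩
      · show (pt 1 0 0) + (pt 1 0 0) ≠ 0
        rw [pt_add]
        exact pt_ne_zero0 (by norm_num) _ _
      · show sphArea (pt 1 0 0) (pt 0 (-1) 0) (pt 1 0 0) ∈ Set.Ioo (-Real.pi) Real.pi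
        rw [hA5]
        exact mem_Ioo_zero
    · refine ⟨rfl, ?_, ?_⟩
      · show (pt (-1) 0 0) + (pt 0 (-1) 0) ≠ 0
        rw [pt_add]
        exact pt_ne_zero0 (by norm_num) _ _
      · show sphArea (pt (-1) 0 0) (pt 0 0 1) (pt 0 (-1) 0) ∈ Set.Ioo (-Real.pi) Real.pi
        rw [hB1]
        exact mem_Ioo_neg
    · refine ⟨rfl, ?_, ?_⟩
      · show (pt 0 0 (-1)) + (pt 0 (-1) 0) ≠ 0
        rw [pt_add]
        exact pt_ne_zero1 (by norm_num) _ _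
      · show sphArea (pt 0 0 (-1)) (pt (-1) 0 0) (pt 0 (-1) 0) ∈ Set.Ioo (-Real.pi) Real.pi
        rw [hB2]
        exact mem_Ioo_neg
    · refine ⟨rfl, ?_, ?_⟩
      · show (pt 0 0 (-1)) + (pt 1 0 0) ≠ 0
        rw [pt_add]
        exact pt_ne_zero0 (by norm_num) _ _
      · show sphArea (pt 0 0 (-1)) (pt 0 (-1) 0) (pt 1 0 0) ∈ Set.Ioo (-Real.pi) Real.pi
        rw [hB3]
        exact mem_Ioo_neg
    · refine ⟨rfl, ?_, ?_⟩
      · show (pt 0 1 0) + (pt 1 0 0) ≠ 0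
        rw [pt_add]
        exact pt_ne_zero0 (by norm_num) _ _
      · show sphArea (pt 0 1 0) (pt 0 0 (-1)) (pt 1 0 0) ∈ Set.Ioo (-Real.pi) Real.pi
        rw [hB4]
        exact mem_Ioo_neg
    · refine ⟨rfl, ?_, ?_⟩
      · show (pt 1 0 0) + (pt 1 0 0) ≠ 0
        rw [pt_add]
        exact pt_ne_zero0 (by norm_num) _ _
      · show sphArea (pt 1 0 0) (pt 0 1 0) (pt 1 0 0) ∈ Set.Ioo (-Real.pi) Real.pi
        rw [hB5]
        exact mem_Ioo_zero
    · intro h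
      rw [h, hP2] at hP1
      nlinarith [Real.pi_pos]
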